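/- Fix σ > 0, z ∈ ℝ, and α ∈ (0,1), and let T ⊆ ℝ be a Lebesgue-measurable set such that both T ∩ (−∞, z] and T ∩ (z, ∞) have positive Lebesgue measure. Then there exists a unique μ* ∈ ℝ satisfying F_TN(z; μ*, σ², T) = 1 − α. -/

import Mathlib

open MeasureTheory

/-- The truncated normal CDF: `F_TN(z; μ, σ², T)` is the Gaussian weight of `T ∩ (-∞, z]`
divided by the Gaussian weight of `T` (with value 0 when the denominator vanishes, matching
the Lean convention `x / 0 = 0`). -/
noncomputable def FTN (z μ σ2 : ℝ) (T : Set ℝ) : ℝ :=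
  (∫ t in T ∩ Set.Iic z, Real.exp (-(t - μ) ^ 2 / (2 * σ2))) /
    (∫ t in T, Real.exp (-(t - μ) ^ 2 / (2 * σ2)))

namespace Stmt7Aux

open Real Set Filter

variable {s2 : ℝ}

private lemma gauss_integrable (hs2 : 0 < s2) (μ : ℝ) :
    Integrable (fun t : ℝ => Real.exp (-(t - μ) ^ 2 / (2 * s2))) := by
  have h0 : (0:ℝ) < 1/(2*s2) := by positivity
  have h := (integrable_exp_neg_mul_sq h0).comp_sub_right μ
  refine h.congr (Filter.Eventually.of_forall fun t => ?_)
  show Real.exp _ = _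
  congr 1
  ring

private lemma setInt_pos (hs2 : 0 < s2) (μ : ℝ) {S : Set ℝ}
    (hvol : 0 < volume S) :
    0 < ∫ t in S, Real.exp (-(t - μ) ^ 2 / (2 * s2)) := by
  rw [setIntegral_pos_iff_support_of_nonneg_ae
    (Filter.Eventually.of_forall fun t => (Real.exp_pos _).le)
    ((gauss_integrable hs2 μ).integrableOn)]
  have hsupp : (Function.support fun t : ℝ => Real.exp (-(t - μ) ^ 2 / (2 * s2))) = Set.univ := by
    ext t; simp [Function.mem_support, (Real.exp_pos _).ne']
  rw [hsupp, Set.univ_inter]; exact hvol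

private lemma setInt_cont (hs2 : 0 < s2) (S : Set ℝ) :
    Continuous fun μ : ℝ => ∫ t in S, Real.exp (-(t - μ) ^ 2 / (2 * s2)) := by
  rw [continuous_iff_continuousAt]
  intro μ₀
  apply continuousAt_of_dominated
    (bound := fun t => Real.exp (1/(2*s2)) * Real.exp (-(t - μ₀) ^ 2 / (2*(2*s2))))
  · exact Filter.Eventually.of_forall fun μ =>
      ((Real.continuous_exp.comp (by continuity)).aestronglyMeasurable)
  · filter_upwards [Metric.ball_mem_nhds μ₀ one_pos] with μ hμ
    refine Filter.Eventually.of_forall fun t => ?_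
    rw [Real.norm_eq_abs, abs_of_pos (Real.exp_pos _), ← Real.exp_add, Real.exp_le_exp]
    have hb : |μ - μ₀| < 1 := by simpa [Real.dist_eq] using hμ
    have hb1 := abs_lt.1 hb
    have e1 : -(t - μ) ^ 2 / (2 * s2) = (-2*(t - μ)^2) / (2*(2*s2)) := by ring
    have e2 : 1/(2*s2) + -(t - μ₀) ^ 2 / (2*(2*s2)) = (2 - (t - μ₀)^2) / (2*(2*s2)) := by ring
    rw [e1, e2]
    apply div_le_div_of_nonneg_right ?_ (by positivity)
    nlinarith [sq_nonneg ((t - μ) - (μ - μ₀)),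
      mul_pos (by linarith : (0:ℝ) < 1 - (μ - μ₀)) (by linarith : (0:ℝ) < 1 + (μ - μ₀))]
  · exact ((gauss_integrable (by positivity : (0:ℝ) < 2*s2) μ₀).integrableOn.const_mul _)
  · exact Filter.Eventually.of_forall fun t =>
      (Real.continuous_exp.comp (by continuity)).continuousAt

private lemma pointwise_le (hs2 : 0 < s2) {μ μ' z t : ℝ} (hμ : μ < μ') (ht : t ≤ z) :
    Real.exp (-(t - μ') ^ 2 / (2 * s2)) ≤
      Real.exp ((μ' - μ) * (2*z - μ - μ') / (2 * s2)) * Real.exp (-(t - μ) ^ 2 / (2 * s2)) := by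
  rw [← Real.exp_add, Real.exp_le_exp, ← add_div]
  apply div_le_div_of_nonneg_right ?_ (by positivity)
  nlinarith [mul_nonneg (by linarith : (0:ℝ) ≤ μ' - μ) (by linarith : (0:ℝ) ≤ z - t)]

private lemma pointwise_lt (hs2 : 0 < s2) {μ μ' z t : ℝ} (hμ : μ < μ') (ht : z < t) :
    Real.exp ((μ' - μ) * (2*z - μ - μ') / (2 * s2)) * Real.exp (-(t - μ) ^ 2 / (2 * s2)) <
      Real.exp (-(t - μ') ^ 2 / (2 * s2)) := by
  rw [← Real.exp_add, Real.exp_lt_exp, ← add_div]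
  rw [div_lt_div_iff_of_pos_right (by positivity : (0:ℝ) < 2 * s2)]
  nlinarith [mul_pos (by linarith : (0:ℝ) < μ' - μ) (by linarith : (0:ℝ) < t - z)]

private lemma intA_le (hs2 : 0 < s2) {μ μ' z : ℝ} (hμ : μ < μ') {A : Set ℝ}
    (hA : MeasurableSet A) (hAz : A ⊆ Iic z) :
    (∫ t in A, Real.exp (-(t - μ') ^ 2 / (2 * s2))) ≤
      Real.exp ((μ' - μ) * (2*z - μ - μ') / (2 * s2)) *
        ∫ t in A, Real.exp (-(t - μ) ^ 2 / (2 * s2)) := by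
  rw [← integral_const_mul]
  exact setIntegral_mono_on (gauss_integrable hs2 μ').integrableOn
    (((gauss_integrable hs2 μ).integrableOn).const_mul _) hA
    (fun t ht => pointwise_le hs2 hμ (hAz ht))

private lemma intB_lt (hs2 : 0 < s2) {μ μ' z : ℝ} (hμ : μ < μ') {B : Set ℝ}
    (hB : MeasurableSet B) (hBz : B ⊆ Ioi z) (hvol : 0 < volume B) :
    Real.exp ((μ' - μ) * (2*z - μ - μ') / (2 * s2)) *
        (∫ t in B, Real.exp (-(t - μ) ^ 2 / (2 * s2))) <
      ∫ t in B, Real.exp (-(t - μ') ^ 2 / (2 * s2)) := by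
  set c := Real.exp ((μ' - μ) * (2*z - μ - μ') / (2 * s2)) with hc
  have hint : IntegrableOn (fun t => Real.exp (-(t - μ') ^ 2 / (2 * s2))
      - c * Real.exp (-(t - μ) ^ 2 / (2 * s2))) B := by
    exact ((gauss_integrable hs2 μ').integrableOn).sub
      (((gauss_integrable hs2 μ).integrableOn).const_mul _)
  have hpos : 0 < ∫ t in B, (Real.exp (-(t - μ') ^ 2 / (2 * s2))
      - c * Real.exp (-(t - μ) ^ 2 / (2 * s2))) := by
    rw [setIntegral_pos_iff_support_of_nonneg_ae ?_ hint]
    · refine lt_of_lt_of_le hvol (measure_mono fun t ht => ⟨?_, ht⟩)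
      have := pointwise_lt hs2 hμ (hBz ht)
      simp only [Function.mem_support]
      intro h; rw [sub_eq_zero] at h; rw [h] at this; exact lt_irrefl _ this
    · rw [EventuallyLE, ae_restrict_iff' hB]
      exact Filter.Eventually.of_forall fun t ht => by
        simpa using (pointwise_lt hs2 hμ (hBz ht)).le
  rw [integral_sub ((gauss_integrable hs2 μ').integrableOn)
    (((gauss_integrable hs2 μ).integrableOn).const_mul _), integral_const_mul] at hpos
  linarith

private lemma ratio_mono (hs2 : 0 < s2) {z : ℝ} {A B : Set ℝ}
    (hA : MeasurableSet A) (hB : MeasurableSet B)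
    (hAz : A ⊆ Iic z) (hBz : B ⊆ Ioi z)
    (hAvol : 0 < volume A) (hBvol : 0 < volume B)
    {μ μ' : ℝ} (hμ : μ < μ') :
    (∫ t in B, Real.exp (-(t - μ) ^ 2 / (2 * s2))) *
        (∫ t in A, Real.exp (-(t - μ') ^ 2 / (2 * s2))) <
      (∫ t in A, Real.exp (-(t - μ) ^ 2 / (2 * s2))) *
        (∫ t in B, Real.exp (-(t - μ') ^ 2 / (2 * s2))) := by
  have pA := setInt_pos hs2 μ hAvol
  have pB := setInt_pos hs2 μ hBvol
  have h1 := intA_le hs2 hμ hA hAz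
  have h2 := intB_lt hs2 hμ hB hBz hBvol
  calc (∫ t in B, Real.exp (-(t - μ) ^ 2 / (2 * s2))) *
        (∫ t in A, Real.exp (-(t - μ') ^ 2 / (2 * s2)))
      ≤ (∫ t in B, Real.exp (-(t - μ) ^ 2 / (2 * s2))) *
        (Real.exp ((μ' - μ) * (2*z - μ - μ') / (2 * s2)) *
          ∫ t in A, Real.exp (-(t - μ) ^ 2 / (2 * s2))) :=
        mul_le_mul_of_nonneg_left h1 pB.le
    _ = (∫ t in A, Real.exp (-(t - μ) ^ 2 / (2 * s2))) *
        (Real.exp ((μ' - μ) * (2*z - μ - μ') / (2 * s2)) *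
          ∫ t in B, Real.exp (-(t - μ) ^ 2 / (2 * s2))) := by ring
    _ < (∫ t in A, Real.exp (-(t - μ) ^ 2 / (2 * s2))) *
        (∫ t in B, Real.exp (-(t - μ') ^ 2 / (2 * s2))) :=
        mul_lt_mul_of_pos_left h2 pA

private lemma tail_Ioi_int {z k : ℝ} (hk : 0 < k) :
    IntegrableOn (fun t : ℝ => Real.exp (-(k * (t - z)))) (Set.Ioi z) := by
  refine IntegrableOn.congr_fun ((exp_neg_integrableOn_Ioi z hk).const_mul (Real.exp (k*z)))
    (fun t _ => ?_) measurableSet_Ioi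
  rw [← Real.exp_add]; congr 1; ring

private lemma tail_Ioi_val {z k : ℝ} (hk : 0 < k) :
    ∫ t in Ioi z, Real.exp (-(k * (t - z))) = k⁻¹ := by
  have h1 : ∀ t : ℝ, Real.exp (-(k * (t - z))) = Real.exp (k*z) * Real.exp (-(k * t)) := by
    intro t; rw [← Real.exp_add]; congr 1; ring
  simp_rw [h1]
  rw [integral_const_mul]
  have h2 := integral_comp_mul_left_Ioi (fun x => Real.exp (-x)) z hk
  simp only [smul_eq_mul] at h2
  rw [h2, integral_exp_neg_Ioi,
    show Real.exp (k*z) * (k⁻¹ * Real.exp (-(k*z))) =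
      k⁻¹ * (Real.exp (k*z) * Real.exp (-(k*z))) from by ring, ← Real.exp_add]
  simp

private lemma tail_Iic_val {z k : ℝ} (hk : 0 < k) :
    ∫ t in Iic z, Real.exp (-(k * (z - t))) = k⁻¹ := by
  have h3 := integral_comp_neg_Iic z (fun u : ℝ => Real.exp (-(k * (z + u))))
  simp_rw [show ∀ t : ℝ, -(k * (z - t)) = -(k * (z + -t)) from fun t => by ring]
  rw [h3]
  have h1 : ∀ t : ℝ, Real.exp (-(k * (z + t))) = Real.exp (-(k*z)) * Real.exp (-(k * t)) := by
    intro t; rw [← Real.exp_add]; congr 1; ring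
  simp_rw [h1]
  rw [integral_const_mul]
  have h2 := integral_comp_mul_left_Ioi (fun x => Real.exp (-x)) (-z) hk
  simp only [smul_eq_mul] at h2
  rw [h2, show k * -z = -(k*z) from by ring, integral_exp_neg_Ioi,
    show Real.exp (-(k*z)) * (k⁻¹ * Real.exp (-(-(k*z)))) =
      k⁻¹ * (Real.exp (-(k*z)) * Real.exp (-(-(k*z)))) from by ring, ← Real.exp_add]
  simp

private lemma tail_Iic_int {z k : ℝ} (hk : 0 < k) :
    IntegrableOn (fun t : ℝ => Real.exp (-(k * (z - t)))) (Iic z) := by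
  have key : IntegrableOn (fun u : ℝ => Real.exp (-(k * (z + u)))) (Ici (-z)) := by
    refine (integrableOn_Ici_iff_integrableOn_Ioi).2 ?_
    refine IntegrableOn.congr_fun
      ((exp_neg_integrableOn_Ioi (-z) hk).const_mul (Real.exp (-(k*z))))
      (fun t _ => ?_) measurableSet_Ioi
    rw [← Real.exp_add]; congr 1; ring
  rw [IntegrableOn, ← Measure.map_neg_eq_self (volume : Measure ℝ),
    measurableEmbedding_neg.restrict_map, measurableEmbedding_neg.integrable_map_iff]
  have hpre : (Neg.neg ⁻¹' Iic z : Set ℝ) = Ici (-z) := by ext x; simp [neg_le]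
  rw [hpre]
  refine IntegrableOn.congr_fun key (fun t _ => ?_) measurableSet_Ici
  show Real.exp _ = Real.exp _
  congr 1; ring

private lemma bounded_pos_right (z : ℝ) {B : Set ℝ} (hBz : B ⊆ Ioi z)
    (hvol : 0 < volume B) : ∃ n : ℕ, 0 < volume (B ∩ Ioc z (z + (n+1))) := by
  by_contra h
  push_neg at h
  simp only [le_zero_iff] at h
  have hcover : B ⊆ ⋃ n : ℕ, B ∩ Ioc z (z + (n+1)) := by
    intro t ht
    refine mem_iUnion.2 ⟨⌈t - z⌉₊, ht, hBz ht, ?_⟩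
    linarith [Nat.le_ceil (t - z)]
  have : volume B = 0 :=
    le_antisymm (le_trans (measure_mono hcover) (le_of_eq (measure_iUnion_null h))) zero_le
  rw [this] at hvol; exact lt_irrefl _ hvol

private lemma bounded_pos_left (z : ℝ) {A : Set ℝ} (hAz : A ⊆ Iic z)
    (hvol : 0 < volume A) : ∃ n : ℕ, 0 < volume (A ∩ Ioc (z - (n+1)) z) := by
  by_contra h
  push_neg at h
  simp only [le_zero_iff] at h
  have hcover : A ⊆ ⋃ n : ℕ, A ∩ Ioc (z - (n+1)) z := by
    intro t ht
    refine mem_iUnion.2 ⟨⌈z - t⌉₊, ht, ?_, hAz ht⟩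
    have h9 := Nat.le_ceil (z - t)
    have : (0:ℝ) ≤ (⌈z - t⌉₊ : ℝ) := Nat.cast_nonneg _
    linarith
  have : volume A = 0 :=
    le_antisymm (le_trans (measure_mono hcover) (le_of_eq (measure_iUnion_null h))) zero_le
  rw [this] at hvol; exact lt_irrefl _ hvol

private lemma g_upper (hs2 : 0 < s2) {z μ : ℝ} (hμ : z < μ) {A : Set ℝ} (hAz : A ⊆ Iic z) :
    (∫ t in A, Real.exp (-(t - μ) ^ 2 / (2 * s2))) ≤
      Real.exp (-(z - μ) ^ 2 / (2 * s2)) * (s2 / (μ - z)) := by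
  set k : ℝ := (μ - z) / s2 with hkdef
  have hk : 0 < k := div_pos (by linarith) hs2
  set E : ℝ := Real.exp (-(z - μ) ^ 2 / (2 * s2)) with hE
  have hub_int : IntegrableOn (fun t : ℝ => E * Real.exp (-(k * (z - t)))) (Iic z) :=
    (tail_Iic_int hk).const_mul E
  have hpt : ∀ t : ℝ, Real.exp (-(t - μ) ^ 2 / (2 * s2)) ≤ E * Real.exp (-(k * (z - t))) := by
    intro t
    rw [hE, ← Real.exp_add, Real.exp_le_exp, hkdef]
    have e1 : -(z - μ) ^ 2 / (2 * s2) + -((μ - z) / s2 * (z - t)) =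
        (-(z - μ) ^ 2 - 2 * (μ - z) * (z - t)) / (2 * s2) := by
      field_simp; ring
    rw [e1]
    apply div_le_div_of_nonneg_right ?_ (by positivity)
    nlinarith [sq_nonneg (t - z)]
  calc (∫ t in A, Real.exp (-(t - μ) ^ 2 / (2 * s2)))
      ≤ ∫ t in A, E * Real.exp (-(k * (z - t))) :=
        setIntegral_mono ((gauss_integrable hs2 μ).integrableOn) (hub_int.mono_set hAz)
          (fun t => hpt t)
    _ ≤ ∫ t in Iic z, E * Real.exp (-(k * (z - t))) :=
        setIntegral_mono_set hub_int
          (Filter.Eventually.of_forall fun t => by positivity)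
          (HasSubset.Subset.eventuallyLE hAz)
    _ = E * (s2 / (μ - z)) := by
        rw [integral_const_mul, tail_Iic_val hk]
        congr 1
        rw [hkdef]
        field_simp

private lemma h_upper (hs2 : 0 < s2) {z μ : ℝ} (hμ : μ < z) {B : Set ℝ} (hBz : B ⊆ Ioi z) :
    (∫ t in B, Real.exp (-(t - μ) ^ 2 / (2 * s2))) ≤
      Real.exp (-(z - μ) ^ 2 / (2 * s2)) * (s2 / (z - μ)) := by
  set k : ℝ := (z - μ) / s2 with hkdef
  have hk : 0 < k := div_pos (by linarith) hs2
  set E : ℝ := Real.exp (-(z - μ) ^ 2 / (2 * s2)) with hE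
  have hub_int : IntegrableOn (fun t : ℝ => E * Real.exp (-(k * (t - z)))) (Ioi z) :=
    (tail_Ioi_int hk).const_mul E
  have hpt : ∀ t : ℝ, Real.exp (-(t - μ) ^ 2 / (2 * s2)) ≤ E * Real.exp (-(k * (t - z))) := by
    intro t
    rw [hE, ← Real.exp_add, Real.exp_le_exp, hkdef]
    have e1 : -(z - μ) ^ 2 / (2 * s2) + -((z - μ) / s2 * (t - z)) =
        (-(z - μ) ^ 2 - 2 * (z - μ) * (t - z)) / (2 * s2) := by
      field_simp; ring
    rw [e1]
    apply div_le_div_of_nonneg_right ?_ (by positivity)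
    nlinarith [sq_nonneg (t - z)]
  calc (∫ t in B, Real.exp (-(t - μ) ^ 2 / (2 * s2)))
      ≤ ∫ t in B, E * Real.exp (-(k * (t - z))) :=
        setIntegral_mono ((gauss_integrable hs2 μ).integrableOn) (hub_int.mono_set hBz)
          (fun t => hpt t)
    _ ≤ ∫ t in Ioi z, E * Real.exp (-(k * (t - z))) :=
        setIntegral_mono_set hub_int
          (Filter.Eventually.of_forall fun t => by positivity)
          (HasSubset.Subset.eventuallyLE hBz)
    _ = E * (s2 / (z - μ)) := by
        rw [integral_const_mul, tail_Ioi_val hk]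
        congr 1
        rw [hkdef]
        field_simp

private lemma exists_big (hs2 : 0 < s2) (z r : ℝ) (hr : 0 < r)
    {A B : Set ℝ} (hB : MeasurableSet B)
    (hAz : A ⊆ Iic z) (hBz : B ⊆ Ioi z) (hBvol : 0 < volume B) :
    ∃ μ : ℝ, r * (∫ t in A, Real.exp (-(t - μ) ^ 2 / (2 * s2))) <
      ∫ t in B, Real.exp (-(t - μ) ^ 2 / (2 * s2)) := by
  obtain ⟨n, hn⟩ := bounded_pos_right z hBz hBvol
  set w : ℝ := z + (n+1) with hw
  set B' : Set ℝ := B ∩ Ioc z w with hB'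
  have hB'fin : volume B' < ⊤ :=
    lt_of_le_of_lt (measure_mono inter_subset_right) measure_Ioc_lt_top
  set m : ℝ := (volume B').toReal with hm
  have hm0 : 0 < m := ENNReal.toReal_pos (ne_of_gt hn) (ne_of_lt hB'fin)
  set μ : ℝ := max w (z + r * s2 / m) + 1 with hμdef
  have hwz : z < w := by rw [hw]; linarith [Nat.cast_nonneg (α := ℝ) n]
  have hμw : w ≤ μ := by rw [hμdef]; have := le_max_left w (z + r * s2 / m); linarith
  have hμz : z < μ := lt_of_lt_of_le hwz hμw
  have hμr : z + r * s2 / m < μ := by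
    rw [hμdef]; have := le_max_right w (z + r * s2 / m); linarith
  refine ⟨μ, ?_⟩
  set E : ℝ := Real.exp (-(z - μ) ^ 2 / (2 * s2)) with hE
  have hEpos : 0 < E := Real.exp_pos _
  have hBlow : E * m ≤ ∫ t in B, Real.exp (-(t - μ) ^ 2 / (2 * s2)) := by
    have step1 : E * m ≤ ∫ t in B', Real.exp (-(t - μ) ^ 2 / (2 * s2)) := by
      refine setIntegral_ge_of_const_le_real (hB.inter measurableSet_Ioc) (ne_of_lt hB'fin)
        (fun t ht => ?_) ((gauss_integrable hs2 μ).integrableOn)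
      rw [hE, Real.exp_le_exp]
      apply div_le_div_of_nonneg_right ?_ (by positivity)
      have h1 : z < t := ht.2.1
      have h2 : t ≤ w := ht.2.2
      nlinarith
    refine le_trans step1 (setIntegral_mono_set ((gauss_integrable hs2 μ).integrableOn)
      (Filter.Eventually.of_forall fun t => (Real.exp_pos _).le)
      (HasSubset.Subset.eventuallyLE inter_subset_left))
  have hAup := g_upper hs2 hμz hAz
  have hmid : r * (E * (s2 / (μ - z))) < E * m := by
    have h5 : r * s2 < m * (μ - z) := by
      have h6 : r * s2 / m < μ - z := by linarith
      calc r * s2 = (r * s2 / m) * m := by field_simp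
        _ < (μ - z) * m := by
            apply mul_lt_mul_of_pos_right h6 hm0
        _ = m * (μ - z) := by ring
    have e7 : r * (E * (s2 / (μ - z))) = E * ((r * s2) / (μ - z)) := by ring
    rw [e7]
    apply mul_lt_mul_of_pos_left ?_ hEpos
    rw [div_lt_iff₀ (by linarith : (0:ℝ) < μ - z)]
    linarith
  calc r * (∫ t in A, Real.exp (-(t - μ) ^ 2 / (2 * s2)))
      ≤ r * (E * (s2 / (μ - z))) := by
        apply mul_le_mul_of_nonneg_left hAup hr.le
    _ < E * m := hmid
    _ ≤ _ := hBlow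

private lemma exists_small (hs2 : 0 < s2) (z r : ℝ) (hr : 0 < r)
    {A B : Set ℝ} (hA : MeasurableSet A)
    (hAz : A ⊆ Iic z) (hBz : B ⊆ Ioi z) (hAvol : 0 < volume A) :
    ∃ μ : ℝ, (∫ t in B, Real.exp (-(t - μ) ^ 2 / (2 * s2))) <
      r * (∫ t in A, Real.exp (-(t - μ) ^ 2 / (2 * s2))) := by
  obtain ⟨n, hn⟩ := bounded_pos_left z hAz hAvol
  set w : ℝ := z - (n+1) with hw
  set A' : Set ℝ := A ∩ Ioc w z with hA'
  have hA'fin : volume A' < ⊤ :=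
    lt_of_le_of_lt (measure_mono inter_subset_right) measure_Ioc_lt_top
  set m : ℝ := (volume A').toReal with hm
  have hm0 : 0 < m := ENNReal.toReal_pos (ne_of_gt hn) (ne_of_lt hA'fin)
  set μ : ℝ := min w (z - s2 / (r * m)) - 1 with hμdef
  have hwz : w < z := by rw [hw]; linarith [Nat.cast_nonneg (α := ℝ) n]
  have hμw : μ ≤ w := by rw [hμdef]; have := min_le_left w (z - s2 / (r * m)); linarith
  have hμz : μ < z := lt_of_le_of_lt hμw hwz
  have hμr : μ < z - s2 / (r * m) := by
    rw [hμdef]; have := min_le_right w (z - s2 / (r * m)); linarith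
  refine ⟨μ, ?_⟩
  set E : ℝ := Real.exp (-(z - μ) ^ 2 / (2 * s2)) with hE
  have hEpos : 0 < E := Real.exp_pos _
  have hAlow : E * m ≤ ∫ t in A, Real.exp (-(t - μ) ^ 2 / (2 * s2)) := by
    have step1 : E * m ≤ ∫ t in A', Real.exp (-(t - μ) ^ 2 / (2 * s2)) := by
      refine setIntegral_ge_of_const_le_real (hA.inter measurableSet_Ioc) (ne_of_lt hA'fin)
        (fun t ht => ?_) ((gauss_integrable hs2 μ).integrableOn)
      rw [hE, Real.exp_le_exp]
      apply div_le_div_of_nonneg_right ?_ (by positivity)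
      have h1 : w < t := ht.2.1
      have h2 : t ≤ z := ht.2.2
      nlinarith
    refine le_trans step1 (setIntegral_mono_set ((gauss_integrable hs2 μ).integrableOn)
      (Filter.Eventually.of_forall fun t => (Real.exp_pos _).le)
      (HasSubset.Subset.eventuallyLE inter_subset_left))
  have hBup := h_upper hs2 hμz hBz
  have hmid : E * (s2 / (z - μ)) < r * (E * m) := by
    have h5 : s2 < r * m * (z - μ) := by
      have h6 : s2 / (r * m) < z - μ := by linarith
      calc s2 = (s2 / (r * m)) * (r * m) := by field_simp
        _ < (z - μ) * (r * m) := by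
            apply mul_lt_mul_of_pos_right h6 (by positivity)
        _ = r * m * (z - μ) := by ring
    have e7 : r * (E * m) = E * (r * m) := by ring
    rw [e7]
    apply mul_lt_mul_of_pos_left ?_ hEpos
    rw [div_lt_iff₀ (by linarith : (0:ℝ) < z - μ)]
    linarith
  calc (∫ t in B, Real.exp (-(t - μ) ^ 2 / (2 * s2)))
      ≤ E * (s2 / (z - μ)) := hBup
    _ < r * (E * m) := hmid
    _ ≤ r * (∫ t in A, Real.exp (-(t - μ) ^ 2 / (2 * s2))) := by
        apply mul_le_mul_of_nonneg_left hAlow hr.le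

end Stmt7Aux

open Stmt7Aux Set Filter in
/-- Existence and uniqueness of the quantile conditionally unbiased
estimator: if both `T ∩ (-∞, z]` and `T ∩ (z, ∞)` have positive Lebesgue measure, there is a
unique `μ*` with `F_TN(z; μ*, σ², T) = 1 - α`. -/
theorem stmt7 (σ : ℝ) (hσ : 0 < σ) (z : ℝ) (α : ℝ) (hα : α ∈ Set.Ioo (0 : ℝ) 1)
    (T : Set ℝ) (hT : MeasurableSet T)
    (h1 : 0 < volume (T ∩ Set.Iic z))
    (h2 : 0 < volume (T ∩ Set.Ioi z)) :
    ∃! μstar : ℝ, FTN z μstar (σ ^ 2) T = 1 - α := by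
  obtain ⟨hα0, hα1⟩ := hα
  set s2 : ℝ := σ ^ 2 with hs2def
  have hs2 : 0 < s2 := by positivity
  set A : Set ℝ := T ∩ Set.Iic z with hA
  set B : Set ℝ := T ∩ Set.Ioi z with hB
  have hAm : MeasurableSet A := hT.inter measurableSet_Iic
  have hBm : MeasurableSet B := hT.inter measurableSet_Ioi
  have hAz : A ⊆ Iic z := inter_subset_right
  have hBz : B ⊆ Ioi z := inter_subset_right
  set g : ℝ → ℝ := fun μ => ∫ t in A, Real.exp (-(t - μ) ^ 2 / (2 * s2)) with hgdef
  set h : ℝ → ℝ := fun μ => ∫ t in B, Real.exp (-(t - μ) ^ 2 / (2 * s2)) with hhdef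
  have hgpos : ∀ μ, 0 < g μ := fun μ => setInt_pos hs2 μ h1
  have hhpos : ∀ μ, 0 < h μ := fun μ => setInt_pos hs2 μ h2
  have hsplit : ∀ μ : ℝ, (∫ t in T, Real.exp (-(t - μ) ^ 2 / (2 * s2))) = g μ + h μ := by
    intro μ
    have hunion : T = A ∪ B := by
      ext t
      simp only [hA, hB, Set.mem_union, Set.mem_inter_iff, Set.mem_Iic, Set.mem_Ioi]
      constructor
      · intro ht
        rcases le_or_gt t z with hle | hlt
        · exact Or.inl ⟨ht, hle⟩
        · exact Or.inr ⟨ht, hlt⟩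
      · rintro (⟨ht, _⟩ | ⟨ht, _⟩) <;> exact ht
    have hdisj : Disjoint A B :=
      (Set.Iic_disjoint_Ioi le_rfl).mono inter_subset_right inter_subset_right
    rw [hunion, setIntegral_union hdisj hBm
      ((gauss_integrable hs2 μ).integrableOn) ((gauss_integrable hs2 μ).integrableOn)]
  set r : ℝ := α / (1 - α) with hrdef
  have hr : 0 < r := div_pos hα0 (by linarith)
  have heq : ∀ μ : ℝ, (FTN z μ s2 T = 1 - α ↔ h μ = r * g μ) := by
    intro μ
    have hgp := hgpos μ
    have hhp := hhpos μ
    rw [show FTN z μ s2 T = g μ / (∫ t in T, Real.exp (-(t - μ) ^ 2 / (2 * s2))) from rfl,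
      hsplit μ, div_eq_iff (by linarith : g μ + h μ ≠ 0)]
    rw [hrdef, show α / (1 - α) * g μ = (α * g μ) / (1 - α) from by ring,
      eq_div_iff (by linarith : (1:ℝ) - α ≠ 0)]
    constructor <;> intro hyp <;> nlinarith [hyp]
  obtain ⟨μ₂, hμ₂⟩ := exists_big hs2 z r hr hBm hAz hBz h2
  obtain ⟨μ₁, hμ₁⟩ := exists_small hs2 z r hr hAm hAz hBz h1
  set φ : ℝ → ℝ := fun μ => h μ - r * g μ with hφdef
  have hφcont : Continuous φ :=
    (setInt_cont hs2 B).sub (continuous_const.mul (setInt_cont hs2 A))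
  have hφ1 : φ μ₁ < 0 := by show h μ₁ - r * g μ₁ < 0; linarith [hμ₁]
  have hφ2 : 0 < φ μ₂ := by show 0 < h μ₂ - r * g μ₂; linarith [hμ₂]
  have hmem : (0:ℝ) ∈ uIcc (φ μ₁) (φ μ₂) :=
    Set.mem_uIcc.2 (Or.inl ⟨hφ1.le, hφ2.le⟩)
  obtain ⟨μ₀, _, hφ0⟩ := intermediate_value_uIcc (hφcont.continuousOn) hmem
  have hsol : h μ₀ = r * g μ₀ := by
    have : φ μ₀ = 0 := hφ0
    simp only [hφdef] at this
    linarith [this]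
  refine ⟨μ₀, (heq μ₀).2 hsol, ?_⟩
  intro y hy
  have hy' : h y = r * g y := (heq y).1 hy
  by_contra hne
  have key : ∀ u v : ℝ, u < v → h u = r * g u → h v = r * g v → False := by
    intro u v huv hu hv
    have hmono := ratio_mono hs2 hAm hBm hAz hBz h1 h2 huv
    rw [show (∫ t in B, Real.exp (-(t - u) ^ 2 / (2 * s2))) = h u from rfl,
      show (∫ t in A, Real.exp (-(t - u) ^ 2 / (2 * s2))) = g u from rfl,
      show (∫ t in B, Real.exp (-(t - v) ^ 2 / (2 * s2))) = h v from rfl,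
      show (∫ t in A, Real.exp (-(t - v) ^ 2 / (2 * s2))) = g v from rfl] at hmono
    rw [hu, hv] at hmono
    nlinarith [hmono]
  rcases lt_trichotomy y μ₀ with hlt | heq2 | hgt
  · exact key y μ₀ hlt hy' hsol
  · exact hne heq2
  · exact key μ₀ y hgt hsol hy'
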